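/- Let r ≥ 1, N ≥ 3 and 1 ≤ k ≤ (N−1)/2 be integers, and define for t ∈ ℝ the series C(t) = k^{−(1+r)}·cos(k·t) + Σ_{m=1}^∞ [ (m·N+k)^{−(1+r)}·cos((m·N+k)·t) + (−1)^{1+r}·(m·N−k)^{−(1+r)}·cos((m·N−k)·t) ] and the constant H = k^{−(1+r)} + Σ_{m=1}^∞ [ (m·N+k)^{−(1+r)} + (−1)^{1+r}·(m·N−k)^{−(1+r)} ]. Then for every node x_j = 2π(j−1)/N, j = 1,…,N, one has C(x_j) = H·cos(k·x_j). -/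
import Mathlib


/-- At the nodes of the uniform grid `x_j = 2π(j-1)/N`, the cosine component
series `C(t)` of the trigonometric interpolation spline of order `r` (with
convergence factor `σ1(r,k) = k^{-(1+r)}`) collapses, by aliasing, to
`H · cos(k x_j)` where `H` is the normalizing constant. -/
theorem cosine_component_at_nodes (r N k : ℕ) (hr : 1 ≤ r) (hN : 3 ≤ N)
    (hk1 : 1 ≤ k) (hk2 : k ≤ (N - 1) / 2)
    (C : ℝ → ℝ)
    (hC : ∀ t, C t = 1 / (k : ℝ) ^ (1 + r) * Real.cos ((k : ℝ) * t) +
      ∑' m : ℕ, (1 / (((m : ℝ) + 1) * N + k) ^ (1 + r) *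
            Real.cos ((((m : ℝ) + 1) * N + k) * t) +
          (-1 : ℝ) ^ (1 + r) * (1 / (((m : ℝ) + 1) * N - k) ^ (1 + r) *
            Real.cos ((((m : ℝ) + 1) * N - k) * t))))
    (H : ℝ)
    (hH : H = 1 / (k : ℝ) ^ (1 + r) +
      ∑' m : ℕ, (1 / (((m : ℝ) + 1) * N + k) ^ (1 + r) +
        (-1 : ℝ) ^ (1 + r) * (1 / (((m : ℝ) + 1) * N - k) ^ (1 + r))))
    (x : ℕ → ℝ) (hx : ∀ j, x j = 2 * Real.pi * ((j : ℝ) - 1) / N) :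
    ∀ j ∈ Finset.Icc 1 N, C (x j) = H * Real.cos ((k : ℝ) * x j) := by
  intro j hj
  have hN0 : (N : ℝ) ≠ 0 := by
    have : 0 < N := by omega
    exact_mod_cast this.ne'
  rw [hC, hH]
  have hsum : ∀ m : ℕ,
      (1 / (((m : ℝ) + 1) * N + k) ^ (1 + r) *
          Real.cos ((((m : ℝ) + 1) * N + k) * x j) +
        (-1 : ℝ) ^ (1 + r) * (1 / (((m : ℝ) + 1) * N - k) ^ (1 + r) *
          Real.cos ((((m : ℝ) + 1) * N - k) * x j)))
      = (1 / (((m : ℝ) + 1) * N + k) ^ (1 + r) +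
          (-1 : ℝ) ^ (1 + r) * (1 / (((m : ℝ) + 1) * N - k) ^ (1 + r))) *
        Real.cos ((k : ℝ) * x j) := by
    intro m
    have e1 := Real.cos_add_int_mul_two_pi ((k : ℝ) * x j) (((m : ℤ) + 1) * ((j : ℤ) - 1))
    have e2 := Real.cos_add_int_mul_two_pi (-((k : ℝ) * x j)) (((m : ℤ) + 1) * ((j : ℤ) - 1))
    have h1 : Real.cos ((((m : ℝ) + 1) * N + k) * x j) = Real.cos ((k : ℝ) * x j) := by
      rw [← e1]; congr 1; rw [hx]; field_simp; push_cast; ring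
    have h2 : Real.cos ((((m : ℝ) + 1) * N - k) * x j) = Real.cos ((k : ℝ) * x j) := by
      rw [← Real.cos_neg ((k:ℝ) * x j), ← e2]; congr 1; rw [hx]; field_simp; push_cast; ring
    rw [h1, h2]
    ring
  rw [tsum_congr hsum, tsum_mul_right]
  ring
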